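/- Let u and v be positive integers with u > v ≥ 2. There exist strictly increasing sequences of positive integers A = {a_k} with a_k ~ u^k and B = {b_n} with b_n ~ v^n such that A is a subsequence of B if and only if u = v^r for some integer r ≥ 2. And in fact, for every strictly increasing sequence A with a_k ~ u^k such a supersequence B exists iff u = v^r. -/

import Mathlib

open Filter Real Topology

lemma nat_eq_of_abs_lt_one (p q : ℕ) (h : |(p:ℝ) - q| < 1) : p = q := by
  rw [abs_lt] at h
  have h1 : (p:ℤ) - q < 1 := by exact_mod_cast h.2
  have h2 : (-1:ℤ) < (p:ℤ) - q := by exact_mod_cast h.1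
  omega

lemma fwd14 (u v : ℕ) (hv : 2 ≤ v) (huv : v < u)
    (a b : ℕ → ℕ) (idx : ℕ → ℕ) (ha : ∀ k, 0 < a k)
    (hta : Tendsto (fun k : ℕ => (a k : ℝ) / (u : ℝ) ^ k) atTop (nhds 1))
    (htb : Tendsto (fun n : ℕ => (b n : ℝ) / (v : ℝ) ^ n) atTop (nhds 1))
    (hidx : StrictMono idx) (hba : ∀ k, b (idx k) = a k) :
    ∃ r : ℕ, 2 ≤ r ∧ u = v ^ r := by
  have hu2 : 2 ≤ u := hv.trans huv.le
  have hupos : (0:ℝ) < u := by positivity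
  have hvpos : (0:ℝ) < v := by positivity
  have hv1 : (1:ℝ) < v := by exact_mod_cast hv.trans_lt' one_lt_two
  have hu1 : (1:ℝ) < u := by exact_mod_cast hu2.trans_lt' one_lt_two
  have hlogv : 0 < Real.log v := Real.log_pos hv1
  have hlogu : 0 < Real.log u := Real.log_pos hu1
  -- subsequence limit
  have hg : Tendsto (fun k : ℕ => (a k : ℝ) / (v : ℝ) ^ (idx k)) atTop (nhds 1) := by
    have := htb.comp hidx.tendsto_atTop
    refine this.congr fun k => ?_
    simp [Function.comp, hba k]
  -- quotient tends to 1
  have hq : Tendsto (fun k : ℕ => (u : ℝ) ^ k / (v : ℝ) ^ (idx k)) atTop (nhds 1) := by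
    have h := hg.div hta one_ne_zero
    rw [div_one] at h
    refine h.congr fun k => ?_
    have hak : (a k : ℝ) ≠ 0 := by exact_mod_cast (ha k).ne'
    have h1 : ((v:ℝ) ^ idx k) ≠ 0 := by positivity
    have h2 : ((u:ℝ) ^ k) ≠ 0 := by positivity
    simp only [Pi.div_apply]
    field_simp
  -- logs
  have hlog : Tendsto (fun k : ℕ => (k : ℝ) * Real.log u - (idx k : ℝ) * Real.log v)
      atTop (nhds 0) := by
    have hcont : Tendsto Real.log (nhds (1:ℝ)) (nhds 0) := by
      simpa using (Real.continuousAt_log one_ne_zero).tendsto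
    have := hcont.comp hq
    refine this.congr fun k => ?_
    have h1 : ((v:ℝ) ^ idx k) ≠ 0 := by positivity
    have h2 : ((u:ℝ) ^ k) ≠ 0 := by positivity
    simp [Function.comp, Real.log_div h2 h1, Real.log_pow, mul_comm]
  set t : ℝ := Real.log u / Real.log v with ht
  have he : Tendsto (fun k : ℕ => (k : ℝ) * t - (idx k : ℝ)) atTop (nhds 0) := by
    have := hlog.div_const (Real.log v)
    rw [zero_div] at this
    refine this.congr fun k => ?_
    rw [ht]
    field_simp [ht]
  have hd : Tendsto (fun k : ℕ => (idx (k+1) : ℝ) - idx k) atTop (nhds t) := by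
    have h2 := he.comp (tendsto_add_atTop_nat 1)
    have h3 := (he.sub h2).const_add t
    rw [sub_zero, add_zero] at h3
    refine h3.congr fun k => ?_
    simp only [Function.comp]
    push_cast
    ring
  have hev : ∀ᶠ k in atTop, |((idx (k+1) : ℝ) - idx k) - t| < 1/2 := by
    obtain ⟨K, hK⟩ := Metric.tendsto_atTop.mp hd (1/2) (by norm_num)
    refine eventually_atTop.mpr ⟨K, fun k hk => ?_⟩
    have h := hK k hk
    rwa [Real.dist_eq] at h
  obtain ⟨K, hK⟩ := eventually_atTop.mp hev
  set m : ℕ := idx (K+1) - idx K with hm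
  have hcast : ∀ k, (idx (k+1) : ℝ) - idx k = ((idx (k+1) - idx k : ℕ) : ℝ) := by
    intro k
    rw [Nat.cast_sub (hidx (Nat.lt_succ_self k)).le]
  have hconst : ∀ k ≥ K, idx (k+1) - idx k = m := by
    intro k hk
    have h1 := hK k hk
    have h2 := hK K le_rfl
    rw [hcast] at h1 h2
    refine nat_eq_of_abs_lt_one _ _ ?_
    calc |((idx (k+1) - idx k : ℕ) : ℝ) - ((idx (K+1) - idx K : ℕ) : ℝ)|
        ≤ |((idx (k+1) - idx k : ℕ) : ℝ) - t| + |t - ((idx (K+1) - idx K : ℕ) : ℝ)| := by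
          simpa using abs_sub_le ((idx (k+1) - idx k : ℕ) : ℝ) t _
      _ < 1/2 + 1/2 := add_lt_add h1 (by rw [abs_sub_comm]; exact h2)
      _ = 1 := by norm_num
  have htm : t = m := by
    have hcongr : (fun k : ℕ => (idx (k+1) : ℝ) - idx k) =ᶠ[atTop] fun _ => (m : ℝ) := by
      refine eventually_atTop.mpr ⟨K, fun k hk => ?_⟩
      show (idx (k+1):ℝ) - idx k = (m:ℝ)
      rw [hcast k, hconst k hk]
    exact tendsto_nhds_unique (hd.congr' hcongr) tendsto_const_nhds
  have ht1 : 1 < t := by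
    rw [ht, lt_div_iff₀ hlogv, one_mul]
    exact Real.log_lt_log hvpos (by exact_mod_cast huv)
  have hm2 : 2 ≤ m := by
    by_contra hcon
    interval_cases m <;> rw [htm] at ht1 <;> norm_num at ht1
  refine ⟨m, hm2, ?_⟩
  have hlogeq : Real.log u = Real.log ((v:ℝ) ^ m) := by
    rw [Real.log_pow]
    have : Real.log u = t * Real.log v := by rw [ht, div_mul_cancel₀ _ hlogv.ne']
    rw [this, htm]
  have : (u:ℝ) = (v:ℝ) ^ m :=
    Real.log_injOn_pos (Set.mem_Ioi.mpr hupos) (Set.mem_Ioi.mpr (by positivity)) hlogeq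
  exact_mod_cast this


lemma bwd14 (u v r : ℕ) (hv : 2 ≤ v) (hr : 2 ≤ r) (hur : u = v ^ r)
    (a : ℕ → ℕ) (hmono : StrictMono a) (ha : ∀ k, 0 < a k)
    (hta : Tendsto (fun k : ℕ => (a k : ℝ) / (u : ℝ) ^ k) atTop (nhds 1)) :
    ∃ b : ℕ → ℕ, StrictMono b ∧ (∀ n, 0 < b n) ∧
      Tendsto (fun n : ℕ => (b n : ℝ) / (v : ℝ) ^ n) atTop (nhds 1) ∧
      ∃ idx : ℕ → ℕ, StrictMono idx ∧ ∀ k, b (idx k) = a k := by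
  have hr0 : 0 < r := by omega
  have hu4 : 4 ≤ u := by
    rw [hur]
    calc 4 = 2^2 := by norm_num
    _ ≤ 2^r := Nat.pow_le_pow_right (by omega) hr
    _ ≤ v^r := Nat.pow_le_pow_left hv r
  have hvR : (0:ℝ) < v := by positivity
  have huR : (0:ℝ) < u := by positivity
  have hta1 : Tendsto (fun k : ℕ => (a (k+1) : ℝ) / (u : ℝ) ^ (k+1)) atTop (nhds 1) :=
    hta.comp (tendsto_add_atTop_nat 1)
  -- condition (i)
  have key1 : ∀ᶠ k in atTop, v^(r-1) * a k < a (k+1) := by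
    have hs : Tendsto (fun k : ℕ => (a (k+1) : ℝ) / (u : ℝ) ^ (k+1)
        - (1/v) * ((a k : ℝ) / (u : ℝ) ^ k)) atTop (nhds (1 - (1/v) * 1)) :=
      hta1.sub ((hta.const_mul ((1:ℝ)/v)))
    have hpos : (0:ℝ) < 1 - (1/v) * 1 := by
      rw [mul_one, sub_pos, div_lt_one hvR]
      exact_mod_cast by omega
    filter_upwards [hs.eventually (lt_mem_nhds hpos)] with k hk
    have hupk : (0:ℝ) < (u:ℝ)^k := by positivity
    have hk' : (a k : ℝ) * u < a (k+1) * v := by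
      have h1 : (1/(v:ℝ)) * ((a k : ℝ) / (u : ℝ) ^ k) < (a (k+1) : ℝ) / (u : ℝ) ^ (k+1) := by
        linarith
      rw [div_mul_div_comm, one_mul, div_lt_div_iff₀ (by positivity) (by positivity),
        pow_succ] at h1
      have h3 : (a k:ℝ) * u * (u:ℝ)^k < a (k+1) * v * (u:ℝ)^k := by linarith [h1]
      exact lt_of_mul_lt_mul_right h3 hupk.le
    have h4 : ((v:ℝ)^(r-1) * a k) * v < (a (k+1) : ℝ) * v := by
      have e1 : ((v:ℝ)^(r-1) * a k) * v = (a k : ℝ) * u := by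
        rw [hur]
        push_cast
        rw [mul_comm ((v:ℝ)^(r-1)) ((a k:ℝ)), mul_assoc, ← pow_succ]
        congr 2
        omega
      rw [e1]; exact hk'
    have h5 : (v:ℝ)^(r-1) * a k < (a (k+1) : ℝ) := lt_of_mul_lt_mul_right h4 hvR.le
    exact_mod_cast h5
  -- condition (ii)
  have key2 : ∀ᶠ k in atTop, a k + (k+1)*(r-1) < a (k+1) := by
    have hz : Tendsto (fun k : ℕ => ((r:ℝ)-1) * ((k+1 : ℕ) * (1/(u:ℝ))^(k+1 : ℕ)))
        atTop (nhds (((r:ℝ)-1) * 0)) := by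
      refine Tendsto.const_mul _ ?_
      exact (tendsto_self_mul_const_pow_of_lt_one (by positivity)
        (by rw [div_lt_one huR]; exact_mod_cast by omega)).comp (tendsto_add_atTop_nat 1)
    have hs : Tendsto (fun k : ℕ => (a (k+1) : ℝ) / (u : ℝ) ^ (k+1)
        - (1/u) * ((a k : ℝ) / (u : ℝ) ^ k)
        - ((r:ℝ)-1) * ((k+1 : ℕ) * (1/(u:ℝ))^(k+1 : ℕ))) atTop
        (nhds (1 - (1/u) * 1 - ((r:ℝ)-1) * 0)) :=
      (hta1.sub (hta.const_mul ((1:ℝ)/u))).sub hz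
    have hpos : (0:ℝ) < 1 - (1/u) * 1 - ((r:ℝ)-1) * 0 := by
      rw [mul_one, mul_zero, sub_zero, sub_pos, div_lt_one huR]
      exact_mod_cast by omega
    filter_upwards [hs.eventually (lt_mem_nhds hpos)] with k hk
    have hup : (0:ℝ) < (u:ℝ)^(k+1) := by positivity
    have e1 : (1/(u:ℝ)) * ((a k : ℝ) / (u : ℝ) ^ k) = (a k : ℝ) / (u:ℝ)^(k+1) := by
      rw [div_mul_div_comm, one_mul, pow_succ]
      ring_nf
    have e2 : ((r:ℝ)-1) * ((k+1 : ℕ) * (1/(u:ℝ))^(k+1 : ℕ))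
        = (((r:ℝ)-1) * ((k:ℝ)+1)) / (u:ℝ)^(k+1) := by
      rw [one_div, inv_pow]
      push_cast
      ring
    rw [e1, e2] at hk
    have h1 : ((a k : ℝ) + ((r:ℝ)-1) * ((k:ℝ)+1)) / (u:ℝ)^(k+1) < (a (k+1) : ℝ) / (u:ℝ)^(k+1) := by
      rw [add_div]
      linarith
    have h2 : (a k : ℝ) + ((r:ℝ)-1) * ((k:ℝ)+1) < (a (k+1) : ℝ) :=
      (div_lt_div_iff_of_pos_right hup).mp h1
    have h3 : (a k : ℝ) + ((k:ℝ)+1) * (((r:ℕ)-1 : ℕ) : ℝ) < (a (k+1) : ℝ) := by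
      rw [Nat.cast_sub hr0]
      push_cast
      linarith
    exact_mod_cast h3
  -- choose K
  obtain ⟨N, hN⟩ := (key1.and key2).exists_forall_of_atTop
  set K : ℕ := N + 1 with hKdef
  have hK1 : ∀ k, K ≤ k → v^(r-1) * a k < a (k+1) := fun k hk => (hN k (by omega)).1
  have hK2 : a (K-1) + K*(r-1) < a K := by
    have := (hN N le_rfl).2
    simpa [hKdef] using this
  have hK0 : 0 < K := by omega
  have hKr : K < K * r := by nlinarith
  -- the supersequence
  set b : ℕ → ℕ := fun n =>
    if n < K then a n else if n < K*r then a (K-1) + (n - K + 1) else a (n / r) * v ^ (n % r)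
    with hbdef
  have hb3 : ∀ n, K*r ≤ n → b n = a (n / r) * v ^ (n % r) := by
    intro n hn
    have h1 : ¬ n < K := by omega
    have h2 : ¬ n < K*r := by omega
    simp [hbdef, h1, h2]
  set idx : ℕ → ℕ := fun k => if k < K then k else k * r with hidxdef
  have hbidx : ∀ k, b (idx k) = a k := by
    intro k
    by_cases hk : k < K
    · simp [hbdef, hidxdef, hk]
    · have hk' : K ≤ k := by omega
      have hkr : K*r ≤ k*r := Nat.mul_le_mul_right r hk'
      simp only [hidxdef, if_neg hk]
      rw [hb3 _ hkr, Nat.mul_div_cancel _ hr0, Nat.mul_mod_left, pow_zero, mul_one]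
  have hb1 : ∀ n, n < K → b n = a n := by
    intro n hn; simp [hbdef, hn]
  have hb2 : ∀ n, K ≤ n → n < K*r → b n = a (K-1) + (n - K + 1) := by
    intro n h1 h2
    simp [hbdef, Nat.not_lt.mpr h1, h2]
  have hmulKr : K * r = K * (r-1) + K := by
    have : K * ((r-1) + 1) = K * (r-1) + K := by ring
    rw [← this]
    congr 1
    omega
  have hbmono : StrictMono b := by
    apply strictMono_nat_of_lt_succ
    intro n
    rcases lt_or_ge (n+1) K with h1 | h1
    · rw [hb1 n (by omega), hb1 (n+1) h1]
      exact hmono (Nat.lt_succ_self n)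
    rcases lt_or_ge n K with h2 | h2
    · -- n = K - 1
      rw [hb1 n h2, hb2 (n+1) h1 (by omega)]
      have hn : n = K - 1 := by omega
      rw [hn]
      omega
    rcases lt_or_ge (n+1) (K*r) with h3 | h3
    · rw [hb2 n h2 (by omega), hb2 (n+1) (by omega) h3]
      omega
    rcases lt_or_ge n (K*r) with h4 | h4
    · -- n = K*r - 1
      have hn : n + 1 = K * r := by omega
      rw [hb2 n h2 h4, hb3 (n+1) (by omega), hn, Nat.mul_div_cancel _ hr0,
        Nat.mul_mod_left, pow_zero, mul_one]
      omega
    · -- interior of blocks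
      set q := n / r with hq
      set s := n % r with hs
      have hsr : s < r := Nat.mod_lt _ hr0
      have hnd : r * q + s = n := Nat.div_add_mod n r
      have hKq : K ≤ q := (Nat.le_div_iff_mul_le hr0).mpr (by omega)
      rcases lt_or_ge s (r-1) with hcase | hcase
      · have e1 : (n+1)/r = q := by
          have : n + 1 = (s+1) + r*q := by omega
          rw [this, Nat.add_mul_div_left _ _ hr0, Nat.div_eq_of_lt (by omega), zero_add]
        have e2 : (n+1) % r = s + 1 := by
          have : n + 1 = (s+1) + r*q := by omega
          rw [this, Nat.add_mul_mod_self_left, Nat.mod_eq_of_lt (by omega)]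
        rw [hb3 n h4, hb3 (n+1) (by omega), e1, e2, ← hq, ← hs]
        have hvpow : v ^ s < v ^ (s+1) := Nat.pow_lt_pow_right (by omega) (by omega)
        exact mul_lt_mul_of_pos_left hvpow (ha q)
      · have hsval : s = r - 1 := by omega
        have e0 : n + 1 = r * (q+1) := by
          have : r*(q+1) = r*q + r := by ring
          omega
        have e1 : (n+1)/r = q + 1 := by rw [e0, Nat.mul_div_cancel_left _ hr0]
        have e2 : (n+1) % r = 0 := by rw [e0, Nat.mul_mod_right]
        rw [hb3 n h4, hb3 (n+1) (by omega), e1, e2, pow_zero, mul_one, ← hq, ← hs, hsval,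
          mul_comm]
        exact hK1 q hKq
  have hbpos : ∀ n, 0 < b n := by
    intro n
    by_cases h1 : n < K
    · simpa [hbdef, h1] using ha n
    by_cases h2 : n < K*r
    · simp only [hbdef, if_neg h1, if_pos h2]
      have := ha (K-1)
      omega
    · rw [hb3 n (by omega)]
      exact Nat.mul_pos (ha _) (Nat.pow_pos (by omega))
  have hidxmono : StrictMono idx := by
    apply strictMono_nat_of_lt_succ
    intro k
    by_cases h1 : k + 1 < K
    · simp [hidxdef, if_pos (by omega : k < K), if_pos h1]
    by_cases h2 : k < K
    · simp only [hidxdef, if_pos h2, if_neg h1]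
      calc k < k + 1 := Nat.lt_succ_self k
      _ ≤ (k+1)*r := Nat.le_mul_of_pos_right _ hr0
    · simp only [hidxdef, if_neg h2, if_neg h1]
      exact (Nat.mul_lt_mul_right hr0).mpr (Nat.lt_succ_self k)
  -- asymptotics
  have hdivtop : Tendsto (fun n : ℕ => n / r) atTop atTop := by
    refine tendsto_atTop_atTop.mpr fun c => ⟨c * r, fun n hn => ?_⟩
    exact (Nat.le_div_iff_mul_le hr0).mpr hn
  have htb : Tendsto (fun n : ℕ => (b n : ℝ) / (v : ℝ) ^ n) atTop (nhds 1) := by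
    refine Tendsto.congr' ?_ (hta.comp hdivtop)
    refine eventually_atTop.mpr ⟨K*r, fun n hn => ?_⟩
    simp only [Function.comp]
    rw [hb3 n hn]
    set q := n / r with hq
    set s := n % r with hs
    have hnd : r * q + s = n := Nat.div_add_mod n r
    have evn : (v:ℝ)^n = (u:ℝ)^q * (v:ℝ)^s := by
      rw [hur, ← hnd]
      push_cast
      rw [pow_add, pow_mul]
    rw [evn]
    push_cast
    rw [mul_div_mul_right _ _ (by positivity : ((v:ℝ))^s ≠ 0)]
  exact ⟨b, hbmono, hbpos, htb, idx, hidxmono, hbidx⟩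



/-- For integers `u > v ≥ 2`: a strictly increasing sequence `A ~ u^k` admits a strictly
increasing supersequence `B ~ v^n` (for some `A`, equivalently for every such `A`) if
and only if `u = v^r` for some `r ≥ 2`. -/
theorem stmt14 (u v : ℕ) (hv : 2 ≤ v) (huv : v < u) :
    ((∃ a : ℕ → ℕ, StrictMono a ∧ (∀ k, 0 < a k) ∧
        Filter.Tendsto (fun k : ℕ => (a k : ℝ) / (u : ℝ) ^ k) Filter.atTop (nhds 1) ∧
        ∃ b : ℕ → ℕ, StrictMono b ∧ (∀ n, 0 < b n) ∧
          Filter.Tendsto (fun n : ℕ => (b n : ℝ) / (v : ℝ) ^ n) Filter.atTop (nhds 1) ∧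
          ∃ idx : ℕ → ℕ, StrictMono idx ∧ ∀ k, b (idx k) = a k) ↔
      ∃ r : ℕ, 2 ≤ r ∧ u = v ^ r) ∧
    ((∀ a : ℕ → ℕ, StrictMono a → (∀ k, 0 < a k) →
        Filter.Tendsto (fun k : ℕ => (a k : ℝ) / (u : ℝ) ^ k) Filter.atTop (nhds 1) →
        ∃ b : ℕ → ℕ, StrictMono b ∧ (∀ n, 0 < b n) ∧
          Filter.Tendsto (fun n : ℕ => (b n : ℝ) / (v : ℝ) ^ n) Filter.atTop (nhds 1) ∧
          ∃ idx : ℕ → ℕ, StrictMono idx ∧ ∀ k, b (idx k) = a k) ↔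
      ∃ r : ℕ, 2 ≤ r ∧ u = v ^ r) := by
  have hu2 : 2 ≤ u := hv.trans huv.le
  have hu1 : (1:ℝ) < u := by exact_mod_cast by omega
  -- the canonical sequence a_k = u^k
  have hAmono : StrictMono (fun k : ℕ => u ^ k) := fun k k' h =>
    Nat.pow_lt_pow_right (by omega) h
  have hApos : ∀ k, 0 < u ^ k := fun k => Nat.pow_pos (by omega)
  have hAt : Filter.Tendsto (fun k : ℕ => ((u ^ k : ℕ) : ℝ) / (u : ℝ) ^ k)
      Filter.atTop (nhds 1) := by
    refine tendsto_const_nhds.congr fun k => ?_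
    rw [Nat.cast_pow, div_self (by positivity)]
  constructor
  · constructor
    · rintro ⟨a, _, hapos, hta, b, _, _, htb, idx, hidx, hba⟩
      exact fwd14 u v hv huv a b idx hapos hta htb hidx hba
    · rintro ⟨r, hr2, hur⟩
      obtain ⟨b, hb1, hb2, hb3, hb4⟩ := bwd14 u v r hv hr2 hur _ hAmono hApos hAt
      exact ⟨_, hAmono, hApos, hAt, b, hb1, hb2, hb3, hb4⟩
  · constructor
    · intro h
      obtain ⟨b, _, _, htb, idx, hidx, hba⟩ := h _ hAmono hApos hAt
      exact fwd14 u v hv huv _ b idx hApos hAt htb hidx hba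
    · rintro ⟨r, hr2, hur⟩ a hamono hapos hta
      exact bwd14 u v r hv hr2 hur a hamono hapos hta
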